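/- arXiv:1104.0081 — 4 statements merged into one kernel-verified Lean document; each statement's English description precedes it below -/
import Mathlib

section
/- If G is a group of order 80 = 2^4·5 with a normal Sylow 2-subgroup Q and a non-normal Sylow 5-subgroup, then Q is elementary abelian, i.e., G ≅ Z_5 ⋉ (Z_2)^4. -/
section Aux

variable {P Q : Type*} [Group P] [Group Q]

/-- Restrict a homomorphism into automorphisms of `Q` to an invariant subgroup `S`. -/
def restrictAut (φ : P →* MulAut Q) (S : Subgroup Q)
    (hinv : ∀ (p : P) (x : Q), x ∈ S → φ p x ∈ S) : P →* MulAut ↥S where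
  toFun p :=
    { toFun := fun s => ⟨φ p s, hinv p s s.2⟩
      invFun := fun s => ⟨φ p⁻¹ s, hinv p⁻¹ s s.2⟩
      left_inv := fun s => by ext; simp [map_inv]
      right_inv := fun s => by ext; simp [map_inv]
      map_mul' := fun s t => by ext; simp }
  map_one' := by ext s; simp
  map_mul' p q := by ext s; simp [MulAut.mul_apply]

@[simp] lemma restrictAut_apply (φ : P →* MulAut Q) (S : Subgroup Q)
    (hinv : ∀ (p : P) (x : Q), x ∈ S → φ p x ∈ S) (p : P) (s : ↥S) :
    (restrictAut φ S hinv p s : Q) = φ p (s : Q) := rfl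

/-- Counting lemma: a group of order 5 acting on a finite group `Q` satisfies
`card Q ≡ card (fixed points) [MOD 5]`. -/
lemma aux_mod [Finite P] [Finite Q] (hP : Nat.card P = 5) (φ : P →* MulAut Q) :
    Nat.card Q ≡ Nat.card {x : Q // ∀ p : P, φ p x = x} [MOD 5] := by
  haveI : Fact (Nat.Prime 5) := ⟨by norm_num⟩
  letI : MulAction P Q := MulAction.compHom Q φ
  have h5 : IsPGroup 5 P := IsPGroup.of_card (by rw [hP, pow_one])
  have hmod := h5.card_modEq_card_fixedPoints (α := Q)
  have hcongr : Nat.card (MulAction.fixedPoints P Q) =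
      Nat.card {x : Q // ∀ p : P, φ p x = x} :=
    Nat.card_congr (Equiv.subtypeEquivRight fun x => Iff.rfl)
  rwa [hcongr] at hmod

/-- Key lemma: if a group of order 5 acts on a group of order 16 with no nontrivial
fixed points, then every nontrivial invariant subgroup is the whole group. -/
lemma aux_key [Finite P] [Finite Q] (hP : Nat.card P = 5) (hQ : Nat.card Q = 16)
    (φ : P →* MulAut Q) (hfree : ∀ x : Q, (∀ p : P, φ p x = x) → x = 1)
    (S : Subgroup Q) (hinv : ∀ (p : P) (x : Q), x ∈ S → φ p x ∈ S)
    (hS : S ≠ ⊥) : S = ⊤ := by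
  have hmod := aux_mod hP (restrictAut φ S hinv)
  have hfix : Nat.card {x : ↥S // ∀ p : P, restrictAut φ S hinv p x = x} = 1 := by
    rw [Nat.card_eq_one_iff_unique]
    refine ⟨⟨fun a b => ?_⟩, ⟨⟨1, fun p => by ext; simp⟩⟩⟩
    have key : ∀ c : {x : ↥S // ∀ p : P, restrictAut φ S hinv p x = x}, (c : ↥S) = 1 := by
      intro c
      exact Subtype.ext (hfree ((c : ↥S) : Q) fun p => congrArg Subtype.val (c.2 p))
    exact Subtype.ext ((key a).trans (key b).symm)
  rw [hfix] at hmod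
  have hdvd : Nat.card ↥S ∣ 16 := hQ ▸ Subgroup.card_subgroup_dvd_card S
  have hle : Nat.card ↥S < 17 := Nat.lt_succ_of_le (Nat.le_of_dvd (by norm_num) hdvd)
  have hdich : ∀ n < 17, n ∣ 16 → n % 5 = 1 → n = 1 ∨ n = 16 := by decide
  rcases hdich _ hle hdvd hmod with h1 | h16
  · exact absurd (Subgroup.card_eq_one.mp h1) hS
  · exact Subgroup.eq_top_of_card_eq S (h16.trans hQ.symm)

end Aux

/-- If `G` is a group of order `80 = 2⁴·5` with a normal Sylow `2`-subgroup `Q` and a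
non-normal Sylow `5`-subgroup, then `Q` is elementary abelian, i.e. `G ≅ ℤ₅ ⋉ (ℤ₂)⁴`. -/
theorem stmt9 (G : Type) [Group G] [Fintype G] (hcard : Fintype.card G = 80)
    (Q : Sylow 2 G) (hQ : (Q : Subgroup G).Normal)
    (hP : ∀ P : Sylow 5 G, ¬ (P : Subgroup G).Normal) :
    (∀ q : (Q : Subgroup G), q * q = 1) ∧
    ∃ φ : Multiplicative (ZMod 5) →* MulAut (Multiplicative (Fin 4 → ZMod 2)),
      Nonempty (G ≃* Multiplicative (Fin 4 → ZMod 2) ⋊[φ] Multiplicative (ZMod 5)) := by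
  haveI : Fact (Nat.Prime 2) := ⟨by norm_num⟩
  haveI : Fact (Nat.Prime 5) := ⟨by norm_num⟩
  haveI : (Q : Subgroup G).Normal := hQ
  obtain ⟨P⟩ := (inferInstance : Nonempty (Sylow 5 G))
  have hG : Nat.card G = 80 := by rw [Nat.card_eq_fintype_card, hcard]
  have cardQ : Nat.card (Q : Subgroup G) = 16 := by
    rw [Sylow.card_eq_multiplicity, hG]
    have h80 : (80:ℕ) = 2^4 * 5 := by norm_num
    rw [h80, Nat.factorization_mul (by norm_num) (by norm_num),
      Nat.Prime.factorization_pow (by norm_num), Nat.Prime.factorization (by norm_num)]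
    simp
  have cardP : Nat.card (P : Subgroup G) = 5 := by
    rw [Sylow.card_eq_multiplicity, hG]
    have h80 : (80:ℕ) = 5 * 2^4 := by norm_num
    rw [h80, Nat.factorization_mul (by norm_num) (by norm_num),
      Nat.Prime.factorization_pow (by norm_num), Nat.Prime.factorization (by norm_num)]
    simp
  -- conjugation action of P on Q
  set φ : (P : Subgroup G) →* MulAut (Q : Subgroup G) :=
    MulAut.conjNormal.comp (P : Subgroup G).subtype with hφdef
  have φ_apply : ∀ (p : (P : Subgroup G)) (x : (Q : Subgroup G)),
      ((φ p x : (Q : Subgroup G)) : G) = (p : G) * (x : G) * (p : G)⁻¹ :=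
    fun p x => MulAut.conjNormal_apply _ _
  -- Q and P are complements
  have hcompl : Subgroup.IsComplement' (Q : Subgroup G) (P : Subgroup G) :=
    Subgroup.isComplement'_of_coprime (by rw [cardQ, cardP, hG]) (by rw [cardQ, cardP]; norm_num)
  -- Step 1: the action is fixed-point free
  have hfree : ∀ x : (Q : Subgroup G), (∀ p : (P : Subgroup G), φ p x = x) → x = 1 := by
    set C : Subgroup (Q : Subgroup G) :=
      { carrier := {x | ∀ p : (P : Subgroup G), φ p x = x}
        one_mem' := fun p => map_one (φ p)
        mul_mem' := fun {a b} ha hb p => by rw [map_mul, ha p, hb p]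
        inv_mem' := fun {a} ha p => by rw [map_inv, ha p] } with hCdef
    have hmod := aux_mod cardP φ
    have hcongr : Nat.card {x : (Q : Subgroup G) // ∀ p : (P : Subgroup G), φ p x = x} =
        Nat.card C := rfl
    rw [hcongr, cardQ] at hmod
    have hdvd : Nat.card C ∣ 16 := cardQ ▸ Subgroup.card_subgroup_dvd_card C
    have hle : Nat.card C < 17 := Nat.lt_succ_of_le (Nat.le_of_dvd (by norm_num) hdvd)
    have hm5 : Nat.card C % 5 = 1 := hmod.symm
    have hdich : ∀ n < 17, n ∣ 16 → n % 5 = 1 → n = 1 ∨ n = 16 := by decide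
    rcases hdich _ hle hdvd hm5 with h1 | h16
    · have hCbot : C = ⊥ := Subgroup.card_eq_one.mp h1
      intro x hx
      have hxC : x ∈ C := hx
      rw [hCbot, Subgroup.mem_bot] at hxC
      exact hxC
    · exfalso
      have hCtop : C = ⊤ := Subgroup.eq_top_of_card_eq C (h16.trans cardQ.symm)
      have hcomm : ∀ (x : (Q : Subgroup G)) (p : (P : Subgroup G)),
          (p : G) * (x : G) * (p : G)⁻¹ = (x : G) := by
        intro x p
        have hx : x ∈ C := hCtop ▸ Subgroup.mem_top x
        have := congrArg Subtype.val (hx p)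
        rwa [φ_apply] at this
      refine hP P ⟨fun y hy g => ?_⟩
      obtain ⟨⟨q, p⟩, rfl⟩ := hcompl.2 g
      have hq : (q : G) ∈ (Q : Subgroup G) := q.2
      have hp : (p : G) ∈ (P : Subgroup G) := p.2
      have hpy : (p : G) * y * (p : G)⁻¹ ∈ (P : Subgroup G) :=
        Subgroup.mul_mem _ (Subgroup.mul_mem _ hp hy) (Subgroup.inv_mem _ hp)
      have hcq : (q : G) * ((p : G) * y * (p : G)⁻¹) * (q : G)⁻¹ = (p : G) * y * (p : G)⁻¹ := by
        have h1 := hcomm ⟨(q : G), hq⟩ ⟨(p : G) * y * (p : G)⁻¹, hpy⟩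
        -- h1 : z * q * z⁻¹ = q  with z := p*y*p⁻¹
        have h2 : ((p : G) * y * (p : G)⁻¹) * (q : G) = (q : G) * ((p : G) * y * (p : G)⁻¹) := by
          have := h1
          rw [mul_inv_eq_iff_eq_mul] at this
          exact this
        rw [← h2]
        group
      have key : ((q : G) * (p : G)) * y * ((q : G) * (p : G))⁻¹
          = (q : G) * ((p : G) * y * (p : G)⁻¹) * (q : G)⁻¹ := by group
      rw [key, hcq]
      exact hpy
  -- Step 2: the center of Q is invariant and nontrivial, hence Q is abelian
  have hinvC : ∀ (p : (P : Subgroup G)) (x : (Q : Subgroup G)),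
      x ∈ Subgroup.center (Q : Subgroup G) → φ p x ∈ Subgroup.center (Q : Subgroup G) := by
    intro p x hx
    rw [Subgroup.mem_center_iff] at hx ⊢
    intro y
    have := congrArg (φ p) (hx ((φ p).symm y))
    simpa [map_mul] using this
  haveI : Nontrivial (Q : Subgroup G) :=
    Finite.one_lt_card_iff_nontrivial.mp (by rw [cardQ]; norm_num)
  have hzne : Subgroup.center (Q : Subgroup G) ≠ ⊥ := by
    have := IsPGroup.center_nontrivial Q.isPGroup'
    exact (Subgroup.nontrivial_iff_ne_bot _).mp this
  have hztop : Subgroup.center (Q : Subgroup G) = ⊤ :=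
    aux_key cardP cardQ φ hfree _ hinvC hzne
  have comm : ∀ a b : (Q : Subgroup G), a * b = b * a := by
    intro a b
    exact (Subgroup.mem_center_iff.mp (hztop ▸ Subgroup.mem_top a) b).symm
  -- Step 3: the subgroup of elements of order dividing 2 is invariant and nontrivial
  set Ω : Subgroup (Q : Subgroup G) :=
    { carrier := {x | x * x = 1}
      one_mem' := by simp
      mul_mem' := fun {a b} ha hb => by
        have ha' : a * a = 1 := ha
        have hb' : b * b = 1 := hb
        show (a * b) * (a * b) = 1
        calc (a * b) * (a * b) = a * (b * a) * b := by simp [mul_assoc]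
          _ = a * (a * b) * b := by rw [comm b a]
          _ = (a * a) * (b * b) := by simp [mul_assoc]
          _ = 1 := by rw [ha', hb', one_mul]
      inv_mem' := fun {a} ha => by
        have ha' : a * a = 1 := ha
        show a⁻¹ * a⁻¹ = 1
        rw [← mul_inv_rev, ha', inv_one] } with hΩdef
  have hinvΩ : ∀ (p : (P : Subgroup G)) (x : (Q : Subgroup G)), x ∈ Ω → φ p x ∈ Ω := by
    intro p x hx
    have hx' : x * x = 1 := hx
    show φ p x * φ p x = 1
    rw [← map_mul, hx', map_one]
  haveI : Fintype (Q : Subgroup G) := Fintype.ofFinite _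
  obtain ⟨t, ht⟩ := exists_prime_orderOf_dvd_card (G := (Q : Subgroup G)) 2
    (by rw [← Nat.card_eq_fintype_card, cardQ]; norm_num)
  have htΩ : t ∈ Ω := by
    show t * t = 1
    have := pow_orderOf_eq_one t
    rwa [ht, pow_two] at this
  have hΩne : Ω ≠ ⊥ := by
    intro hbot
    rw [hbot, Subgroup.mem_bot] at htΩ
    rw [htΩ, orderOf_one] at ht
    norm_num at ht
  have hΩtop : Ω = ⊤ := aux_key cardP cardQ φ hfree _ hinvΩ hΩne
  have hsq : ∀ q : (Q : Subgroup G), q * q = 1 := by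
    intro q
    have : q ∈ Ω := hΩtop ▸ Subgroup.mem_top q
    exact this
  refine ⟨hsq, ?_⟩
  -- Step 4: build the isomorphism
  letI : AddCommGroup (Additive (Q : Subgroup G)) :=
    { (inferInstance : AddGroup (Additive (Q : Subgroup G))) with
      add_comm := fun a b => comm a.toMul b.toMul }
  letI : Module (ZMod 2) (Additive (Q : Subgroup G)) :=
    AddCommGroup.zmodModule (by
      intro x
      rw [two_nsmul]
      exact hsq x.toMul)
  have hcardA : Fintype.card (Additive (Q : Subgroup G)) = 16 := by
    rw [← Nat.card_eq_fintype_card]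
    exact cardQ
  have hfr : Module.finrank (ZMod 2) (Additive (Q : Subgroup G)) = 4 := by
    have h := Module.card_eq_pow_finrank (K := ZMod 2) (V := Additive (Q : Subgroup G))
    rw [hcardA, ZMod.card] at h
    have h4 : (2:ℕ) ^ 4 = 2 ^ Module.finrank (ZMod 2) (Additive (Q : Subgroup G)) := by
      rw [← h]; norm_num
    exact (Nat.pow_right_injective (le_refl 2) h4.symm)
  let bQ := Module.finBasisOfFinrankEq (ZMod 2) (Additive (Q : Subgroup G)) hfr
  let eAdd : Additive (Q : Subgroup G) ≃+ (Fin 4 → ZMod 2) := bQ.equivFun.toAddEquiv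
  let e2 : (Q : Subgroup G) ≃* Multiplicative (Fin 4 → ZMod 2) :=
    AddEquiv.toMultiplicativeRight eAdd
  let e5 : Multiplicative (ZMod 5) ≃* (P : Subgroup G) :=
    mulEquivOfPrimeCardEq (by simp) cardP
  refine ⟨((MulAut.congr e2).toMonoidHom.comp φ).comp e5.toMonoidHom, ?_⟩
  have hcompat : ∀ b : Multiplicative (ZMod 5),
      ((Q : Subgroup G).subtype.comp e2.symm.toMonoidHom).comp
        ((((MulAut.congr e2).toMonoidHom.comp φ).comp e5.toMonoidHom b) : MulAut _).toMonoidHom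
      = (MulAut.conj (((P : Subgroup G).subtype.comp e5.toMonoidHom) b)).toMonoidHom.comp
        ((Q : Subgroup G).subtype.comp e2.symm.toMonoidHom) := by
    intro b
    ext a
    show ((e2.symm (e2 (φ (e5 b) (e2.symm a))) : (Q : Subgroup G)) : G)
      = ((e5 b : (P : Subgroup G)) : G) * ((e2.symm a : (Q : Subgroup G)) : G)
        * ((e5 b : (P : Subgroup G)) : G)⁻¹
    rw [MulEquiv.symm_apply_apply, φ_apply]
  let f := SemidirectProduct.lift ((Q : Subgroup G).subtype.comp e2.symm.toMonoidHom)
    ((P : Subgroup G).subtype.comp e5.toMonoidHom) hcompat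
  have hf : ∀ x, f x = ((e2.symm x.left : (Q : Subgroup G)) : G)
      * ((e5 x.right : (P : Subgroup G)) : G) := fun x => rfl
  have hinj : Function.Injective f := by
    rw [injective_iff_map_eq_one]
    intro x hx
    rw [hf] at hx
    have hxin : ((e2.symm x.left : (Q : Subgroup G)) : G) ∈ (Q : Subgroup G) ⊓ (P : Subgroup G) := by
      constructor
      · exact (e2.symm x.left).2
      · have : ((e2.symm x.left : (Q : Subgroup G)) : G)
            = (((e5 x.right : (P : Subgroup G)) : G))⁻¹ := eq_inv_of_mul_eq_one_left hx
        rw [this]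
        exact Subgroup.inv_mem _ (e5 x.right).2
    rw [hcompl.disjoint.eq_bot, Subgroup.mem_bot] at hxin
    have hleft : x.left = 1 := by
      have h1 : e2.symm x.left = 1 := Subtype.ext hxin
      have := congrArg e2 h1
      rwa [MulEquiv.apply_symm_apply, map_one] at this
    have hright : x.right = 1 := by
      rw [hxin, one_mul] at hx
      have h1 : e5 x.right = 1 := Subtype.ext hx
      have := congrArg e5.symm h1
      rwa [MulEquiv.symm_apply_apply, map_one] at this
    cases x
    simp only at hleft hright
    rw [hleft, hright]
    rfl
  have hsurj : Function.Surjective f := by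
    intro g
    obtain ⟨⟨q, p⟩, rfl⟩ := hcompl.2 g
    refine ⟨⟨e2 ⟨(q : G), q.2⟩, e5.symm ⟨(p : G), p.2⟩⟩, ?_⟩
    rw [hf]
    simp
  exact ⟨(MulEquiv.ofBijective f ⟨hinj, hsurj⟩).symm⟩
end

section
/- Let G be a finite group with cyclic commutator subgroup G'. If G = ⟨a, b⟩ is generated by two elements, then G' = ⟨[a,b]⟩, the cyclic subgroup generated by the commutator a^{-1}b^{-1}ab. -/
open Subgroup
open scoped commutatorElement

/-- In a finite cyclic group, the subgroup generated by `z` is exactly the set of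
elements whose `orderOf z`-th power is `1`. -/
lemma aux_zpowers_eq_setOf {K : Type*} [Group K] [Finite K] [IsCyclic K] (z : K) :
    (Subgroup.zpowers z : Set K) = {b : K | b ^ orderOf z = 1} := by
  classical
  have : Fintype K := Fintype.ofFinite K
  have hpos : 0 < orderOf z := orderOf_pos z
  apply Set.eq_of_subset_of_ncard_le
  · rintro w ⟨n, rfl⟩
    show (z ^ n) ^ (orderOf z : ℕ) = 1
    rw [← zpow_natCast, ← zpow_mul, mul_comm, zpow_mul, zpow_natCast,
      pow_orderOf_eq_one, one_zpow]
  · have h1 : (Subgroup.zpowers z : Set K).ncard = orderOf z := by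
      rw [← Nat.card_coe_set_eq]
      simpa using Nat.card_zpowers z
    have h2 := IsCyclic.card_pow_eq_one_le (α := K) (n := orderOf z) hpos
    rw [h1, Set.ncard_eq_toFinset_card']
    refine le_trans (Finset.card_le_card ?_) h2
    intro x hx
    simp only [Set.mem_toFinset, Set.mem_setOf_eq] at hx
    simpa using hx
  · exact Set.toFinite _

/-- In a finite cyclic group, elements of equal order generate equal subgroups. -/
lemma aux_zpowers_eq {K : Type*} [Group K] [Finite K] [IsCyclic K] {x y : K}
    (h : orderOf x = orderOf y) : Subgroup.zpowers x = Subgroup.zpowers y := by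
  apply SetLike.coe_injective
  rw [aux_zpowers_eq_setOf, aux_zpowers_eq_setOf, h]

/-- If the commutator subgroup is cyclic, the cyclic subgroup generated by an element of
the commutator subgroup is normal. -/
lemma aux_normal {G : Type*} [Group G] [Finite G] (hcyc : IsCyclic (commutator G))
    {c : G} (hc : c ∈ commutator G) : (Subgroup.zpowers c).Normal := by
  constructor
  rintro n ⟨k, rfl⟩ g
  have hd : g * c * g⁻¹ ∈ commutator G :=
    (Subgroup.commutator_normal ⊤ ⊤).conj_mem c hc g
  have horder : orderOf (⟨c, hc⟩ : commutator G) = orderOf (⟨g * c * g⁻¹, hd⟩ : commutator G) := by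
    rw [Subgroup.orderOf_mk, Subgroup.orderOf_mk]
    exact SemiconjBy.orderOf_eq g (show g * c = g * c * g⁻¹ * g by group)
  have key : Subgroup.zpowers c = Subgroup.zpowers (g * c * g⁻¹) := by
    have := aux_zpowers_eq horder
    have hmap := congrArg (Subgroup.map (commutator G).subtype) this
    rwa [MonoidHom.map_zpowers, MonoidHom.map_zpowers] at hmap
  rw [key]
  exact ⟨k, by simpa [MulAut.conj_apply] using (map_zpow (MulAut.conj g) c k).symm⟩

/-- Let `G` be a finite group with cyclic commutator subgroup `G'`. If `G = ⟨a, b⟩` is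
generated by two elements, then `G' = ⟨[a,b]⟩`, the cyclic subgroup generated by the
commutator `a⁻¹b⁻¹ab`. -/
theorem stmt11 (G : Type) [Group G] [Finite G] (hcyc : IsCyclic (commutator G))
    (a b : G) (hgen : Subgroup.closure {a, b} = ⊤) :
    commutator G = Subgroup.zpowers (a⁻¹ * b⁻¹ * a * b) := by
  set c : G := a⁻¹ * b⁻¹ * a * b with hc_def
  have hc : c ∈ commutator G := by
    have : c = ⁅a⁻¹, b⁻¹⁆ := by rw [hc_def]; group
    rw [this, _root_.commutator_def]
    exact commutator_mem_commutator (mem_top _) (mem_top _)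
  have hZnormal : (Subgroup.zpowers c).Normal := aux_normal hcyc hc
  refine le_antisymm ?_ (zpowers_le.mpr hc)
  -- work in the quotient
  rw [_root_.commutator_def, commutator_le]
  intro g _ h _
  let π := QuotientGroup.mk' (Subgroup.zpowers c)
  have hker : ∀ x : G, π x = 1 ↔ x ∈ Subgroup.zpowers c := fun x => by
    rw [← MonoidHom.mem_ker, QuotientGroup.ker_mk']
  -- a and b commute in the quotient
  have hab : Commute (π a) (π b) := by
    have h1 : π c = 1 := (hker c).mpr (mem_zpowers c)
    have h2 : ⁅(π a)⁻¹, (π b)⁻¹⁆ = 1 := by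
      rw [← map_inv, ← map_inv, ← map_commutatorElement, ← h1]
      congr 1
      rw [hc_def]; group
    simpa using (commutatorElement_eq_one_iff_commute.mp h2).inv_inv
  -- the quotient is generated by images of a and b
  have hsurj : Function.Surjective π := QuotientGroup.mk'_surjective _
  have hgenQ : Subgroup.closure (π '' {a, b}) = ⊤ := by
    rw [← MonoidHom.map_closure, hgen, ← MonoidHom.range_eq_map,
      MonoidHom.range_eq_top.mpr hsurj]
  -- all elements of the quotient commute
  have hcomm : ∀ x y : G ⧸ Subgroup.zpowers c, Commute x y := by
    intro x y
    have hx : x ∈ Subgroup.closure (π '' {a, b}) := by rw [hgenQ]; exact mem_top x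
    have hy : y ∈ Subgroup.closure (π '' {a, b}) := by rw [hgenQ]; exact mem_top y
    induction hx, hy using Subgroup.closure_induction₂ with
    | mem x y hx hy =>
      rcases hx with ⟨x', hx', rfl⟩
      rcases hy with ⟨y', hy', rfl⟩
      rcases hx' with rfl | rfl <;> rcases hy' with rfl | rfl
      · exact Commute.refl _
      · exact hab
      · exact hab.symm
      · exact Commute.refl _
    | one_left x hx => exact Commute.one_left x
    | one_right x hx => exact Commute.one_right x
    | mul_left x y z _ _ _ h1 h2 => exact h1.mul_left h2
    | mul_right y z x _ _ _ h1 h2 => exact h1.mul_right h2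
    | inv_left x y _ _ h1 => exact h1.inv_left
    | inv_right x y _ _ h1 => exact h1.inv_right
  -- conclude
  rw [← hker]
  rw [map_commutatorElement]
  exact commutatorElement_eq_one_iff_commute.mpr (hcomm (π g) (π h))
end

section
/- Let G be a group of order 16p as above with G' = Q'·P. Then Q' is normal in G and Q' is contained in the Frattini subgroup Φ(G). -/
open scoped Pointwise
open scoped commutatorElement

/-- Automorphisms of a cyclic group commute. -/
theorem stmt13.mulAut_comm_aux {H : Type*} [Group H] [IsCyclic H] (a b : MulAut H) :
    a * b = b * a := by
  obtain ⟨g, hg⟩ := IsCyclic.exists_generator (α := H)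
  have key : ∀ c : MulAut H, ∃ m : ℤ, ∀ x : H, c x = x ^ m := by
    intro c
    obtain ⟨m, hm⟩ := hg (c g)
    simp only at hm
    refine ⟨m, fun x => ?_⟩
    obtain ⟨k, hk⟩ := hg x
    simp only at hk
    rw [← hk, map_zpow, ← hm, ← zpow_mul, mul_comm, zpow_mul]
  obtain ⟨m, hm⟩ := key a
  obtain ⟨n, hn⟩ := key b
  ext x
  simp only [MulAut.mul_apply, hm, hn, ← zpow_mul, mul_comm]

/-- A maximal subgroup above a normal subgroup with nilpotent quotient is normal. -/
theorem stmt13.aux_normal {G : Type*} [Group G] {N M : Subgroup G} [hN : N.Normal]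
    (hnil : Group.IsNilpotent (G ⧸ N)) (hM : IsCoatom M) (hle : N ≤ M) : M.Normal := by
  set π := QuotientGroup.mk' N with hπ
  have hsurj : Function.Surjective π := QuotientGroup.mk'_surjective N
  have hker : π.ker = N := QuotientGroup.ker_mk' N
  have hcomap : Subgroup.comap π (Subgroup.map π M) = M :=
    Subgroup.comap_map_eq_self (by rw [hker]; exact hle)
  have hmapne : Subgroup.map π M ≠ ⊤ := by
    intro h
    apply hM.1
    rw [← hcomap, h, Subgroup.comap_top]
  have hnc := normalizerCondition_of_isNilpotent (G := G ⧸ N)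
  have hlt : Subgroup.map π M < Subgroup.normalizer (Subgroup.map π M : Set (G ⧸ N)) :=
    hnc _ (lt_top_iff_ne_top.mpr hmapne)
  have hle2 : Subgroup.comap π (Subgroup.normalizer (Subgroup.map π M : Set (G ⧸ N))) ≤ Subgroup.normalizer (M : Set G) := by
    intro g hg
    rw [Subgroup.mem_comap, Subgroup.mem_normalizer_iff] at hg
    rw [Subgroup.mem_normalizer_iff]
    intro h
    rw [← hcomap, Subgroup.mem_comap, Subgroup.mem_comap, map_mul, map_mul, map_inv]
    exact hg (π h)
  have hlt2 : M < Subgroup.normalizer (M : Set G) := by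
    calc M = Subgroup.comap π (Subgroup.map π M) := hcomap.symm
    _ < Subgroup.comap π (Subgroup.normalizer (Subgroup.map π M : Set (G ⧸ N))) := by
        rwa [Subgroup.comap_lt_comap_of_surjective hsurj]
    _ ≤ Subgroup.normalizer (M : Set G) := hle2
  rw [← Subgroup.normalizer_eq_top_iff]
  exact hM.2 _ hlt2

/-- A normal maximal subgroup contains the commutator subgroup. -/
theorem stmt13.aux_comm {G : Type*} [Group G] {M : Subgroup G} (hM : IsCoatom M)
    (hn : M.Normal) : commutator G ≤ M := by
  haveI := hn
  set ρ := QuotientGroup.mk' M with hρ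
  have hsurj : Function.Surjective ρ := QuotientGroup.mk'_surjective M
  have hker : ρ.ker = M := QuotientGroup.ker_mk' M
  have hsub : ∀ B : Subgroup (G ⧸ M), B = ⊥ ∨ B = ⊤ := by
    intro B
    have hle : M ≤ Subgroup.comap ρ B := by
      intro m hm
      rw [Subgroup.mem_comap]
      have h1 : ρ m = 1 := (QuotientGroup.eq_one_iff m).mpr hm
      rw [h1]; exact B.one_mem
    rcases eq_or_lt_of_le hle with h | h
    · left
      have : B = Subgroup.map ρ (Subgroup.comap ρ B) :=
        (Subgroup.map_comap_eq_self_of_surjective hsurj B).symm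
      rw [this, ← h]
      ext x
      simp only [Subgroup.mem_map, Subgroup.mem_bot]
      constructor
      · rintro ⟨m, hm, rfl⟩
        exact (QuotientGroup.eq_one_iff m).mpr hm
      · rintro rfl
        exact ⟨1, Subgroup.one_mem M, map_one ρ⟩
    · right
      have := hM.2 _ h
      rw [← Subgroup.map_comap_eq_self_of_surjective hsurj B, this]
      exact Subgroup.map_top_of_surjective ρ hsurj
  have hnontriv : Nontrivial (G ⧸ M) := by
    have hg : ∃ g, g ∉ M := by
      by_contra h
      push_neg at h
      exact hM.1 ((Subgroup.eq_top_iff' M).mpr h)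
    obtain ⟨g, hg⟩ := hg
    exact ⟨⟨ρ g, 1, fun h => hg ((QuotientGroup.eq_one_iff g).mp h)⟩⟩
  have hcyc : IsCyclic (G ⧸ M) := by
    obtain ⟨x, hx⟩ := exists_ne (1 : G ⧸ M)
    have htop : Subgroup.zpowers x = ⊤ := by
      rcases hsub (Subgroup.zpowers x) with h | h
      · exact absurd (Subgroup.mem_bot.mp (h ▸ Subgroup.mem_zpowers x)) hx
      · exact h
    refine ⟨⟨x, fun y => ?_⟩⟩
    have : y ∈ Subgroup.zpowers x := by rw [htop]; trivial
    exact this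
  have hcommQ : ∀ a b : G ⧸ M, a * b = b * a := by
    haveI := hcyc
    letI := IsCyclic.commGroup (α := G ⧸ M)
    exact mul_comm
  rw [commutator_def, Subgroup.commutator_le]
  intro g₁ _ g₂ _
  have : ρ ⁅g₁, g₂⁆ = 1 := by
    rw [map_commutatorElement]
    exact commutatorElement_eq_one_iff_commute.mpr (hcommQ _ _)
  rw [← hker]
  exact this

/-- Let `G` be a group of order `16p` (`p` an odd prime) with normal Sylow `p`-subgroup `P`
and Sylow `2`-subgroup `Q`, such that `G' = Q'·P`. Then `Q'` (viewed inside `G`) is normal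
in `G` and is contained in the Frattini subgroup `Φ(G)`. -/
theorem stmt13 (G : Type) [Group G] [Fintype G] (p : ℕ) [Fact p.Prime] (hp : p ≠ 2)
    (hcard : Fintype.card G = 16 * p)
    (P : Sylow p G) (hP : (P : Subgroup G).Normal) (Q : Sylow 2 G)
    (hG' : commutator G =
      Subgroup.map (Q : Subgroup G).subtype (commutator ↥(Q : Subgroup G)) ⊔ (P : Subgroup G)) :
    (Subgroup.map (Q : Subgroup G).subtype (commutator ↥(Q : Subgroup G))).Normal ∧
    Subgroup.map (Q : Subgroup G).subtype (commutator ↥(Q : Subgroup G)) ≤ frattini G := by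
  have pp : p.Prime := Fact.out
  haveI : Fact (Nat.Prime 2) := ⟨Nat.prime_two⟩
  haveI := hP
  set K := Subgroup.map (Q : Subgroup G).subtype (commutator ↥(Q : Subgroup G)) with hKdef
  have h16 : (16 : ℕ) = 2 ^ 4 := by norm_num
  have hcardG : Nat.card G = 16 * p := by rw [Nat.card_eq_fintype_card, hcard]
  have hpd16 : ¬ p ∣ 16 := by
    intro h
    have : p ∣ 2 := pp.dvd_of_dvd_pow (n := 4) (h16 ▸ h)
    exact hp ((Nat.prime_dvd_prime_iff_eq pp Nat.prime_two).mp this)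
  have h2dp : ¬ (2 : ℕ) ∣ p := fun h =>
    hp ((Nat.prime_dvd_prime_iff_eq Nat.prime_two pp).mp h).symm
  have hfacp : (16 * p).factorization p = 1 := by
    rw [Nat.factorization_mul (by norm_num) pp.pos.ne', Finsupp.add_apply,
      Nat.factorization_eq_zero_of_not_dvd hpd16, pp.factorization_self]
  have hfac2 : (16 * p).factorization 2 = 4 := by
    rw [Nat.factorization_mul (by norm_num) pp.pos.ne', Finsupp.add_apply,
      Nat.factorization_eq_zero_of_not_dvd h2dp, h16,
      Nat.Prime.factorization_pow Nat.prime_two]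
    simp
  have hcardP : Nat.card ↥(P : Subgroup G) = p := by
    rw [P.card_eq_multiplicity, hcardG, hfacp, pow_one]
  have hcardQ : Nat.card ↥(Q : Subgroup G) = 16 := by
    rw [Q.card_eq_multiplicity, hcardG, hfac2]
    norm_num
  have hPindex : (P : Subgroup G).index = 16 := by
    have := Subgroup.card_mul_index (P : Subgroup G)
    rw [hcardP, hcardG, mul_comm 16 p] at this
    exact Nat.eq_of_mul_eq_mul_left pp.pos this
  have hQindex : (Q : Subgroup G).index = p := by
    have := Subgroup.card_mul_index (Q : Subgroup G)
    rw [hcardQ, hcardG] at this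
    exact Nat.eq_of_mul_eq_mul_left (by norm_num) this
  have hcop : Nat.Coprime 16 p := by
    rw [h16]
    exact ((Nat.coprime_primes Nat.prime_two pp).mpr (Ne.symm hp)).pow_left 4
  have hsup : (P : Subgroup G) ⊔ (Q : Subgroup G) = ⊤ := by
    rw [← Subgroup.index_eq_one]
    have h1 := Subgroup.index_dvd_of_le
      (le_sup_left : (P : Subgroup G) ≤ (P : Subgroup G) ⊔ (Q : Subgroup G))
    have h2 := Subgroup.index_dvd_of_le
      (le_sup_right : (Q : Subgroup G) ≤ (P : Subgroup G) ⊔ (Q : Subgroup G))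
    rw [hPindex] at h1
    rw [hQindex] at h2
    exact Nat.eq_one_of_dvd_one (hcop ▸ Nat.dvd_gcd h1 h2)
  have hKQ : K ≤ (Q : Subgroup G) := by
    rintro k hk
    obtain ⟨k', _, rfl⟩ := Subgroup.mem_map.mp hk
    exact k'.2
  haveI : IsCyclic ↥(P : Subgroup G) := isCyclic_of_prime_card hcardP
  -- elements of K centralize P
  have htriv : ∀ k ∈ commutator ↥(Q : Subgroup G),
      (MulAut.conjNormal ((Q : Subgroup G).subtype k) : MulAut ↥(P : Subgroup G)) = 1 := by
    have hle : commutator ↥(Q : Subgroup G) ≤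
        ((MulAut.conjNormal (H := (P : Subgroup G))).comp (Q : Subgroup G).subtype).ker := by
      rw [commutator_def]
      rw [Subgroup.commutator_le]
      intro g₁ _ g₂ _
      rw [MonoidHom.mem_ker, map_commutatorElement]
      exact commutatorElement_eq_one_iff_commute.mpr (stmt13.mulAut_comm_aux _ _)
    intro k hk
    exact MonoidHom.mem_ker.mp (hle hk)
  have hcent : ∀ k ∈ K, ∀ x ∈ (P : Subgroup G), k * x = x * k := by
    intro k hk x hx
    obtain ⟨k', hk', rfl⟩ := Subgroup.mem_map.mp hk
    have h1 := htriv k' hk'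
    have h2 : ((MulAut.conjNormal ((Q : Subgroup G).subtype k') : MulAut ↥(P : Subgroup G))
        ⟨x, hx⟩ : G) = ((1 : MulAut ↥(P : Subgroup G)) ⟨x, hx⟩ : G) := by rw [h1]
    rw [MulAut.conjNormal_apply] at h2
    simp only [MulAut.one_apply] at h2
    conv_rhs => rw [← h2]
    group
  -- normality
  have hQnorm : ∀ q : ↥(Q : Subgroup G), ∀ h ∈ K, (q : G) * h * (q : G)⁻¹ ∈ K := by
    intro q h hh
    obtain ⟨h', hh', rfl⟩ := Subgroup.mem_map.mp hh
    refine Subgroup.mem_map.mpr ⟨q * h' * q⁻¹, ?_, by simp⟩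
    exact (Subgroup.commutator_normal ⊤ ⊤).conj_mem h' hh' q
  have hnorm : K.Normal := by
    rw [← Subgroup.normalizer_eq_top_iff, ← top_le_iff, ← hsup]
    refine sup_le ?_ ?_
    · intro x hx
      rw [Subgroup.mem_normalizer_iff]
      intro h
      constructor
      · intro hh
        have hc := hcent h hh x hx
        have : x * h * x⁻¹ = h := by rw [← hc]; group
        rw [this]; exact hh
      · intro hh
        have hc := hcent _ hh x hx
        have h4 : x * h = x * (x * h * x⁻¹) := by rw [← hc]; group
        rw [mul_left_cancel h4]; exact hh
    · intro q hq
      rw [Subgroup.mem_normalizer_iff]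
      intro h
      constructor
      · exact fun hh => hQnorm ⟨q, hq⟩ h hh
      · intro hh
        have := hQnorm ⟨q, hq⟩⁻¹ _ hh
        simpa [mul_assoc] using this
  refine ⟨hnorm, ?_⟩
  -- Frattini part
  have hKle : ∀ M : Subgroup G, IsCoatom M → K ≤ M := by
    intro M hM
    by_cases hPM : (P : Subgroup G) ≤ M
    · -- maximal subgroups containing P contain the commutator, hence K
      have hnil : Group.IsNilpotent (G ⧸ (P : Subgroup G)) := by
        have hq : IsPGroup 2 (G ⧸ (P : Subgroup G)) := by
          apply IsPGroup.of_card (n := 4)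
          rw [← Subgroup.index_eq_card, hPindex, h16]
        exact hq.isNilpotent
      have hMn := stmt13.aux_normal hnil hM hPM
      have hcm := stmt13.aux_comm hM hMn
      calc K ≤ commutator G := by rw [hG']; exact le_sup_left
      _ ≤ M := hcm
    · -- maximal subgroups not containing P are Sylow 2-subgroups
      have hsupM : M ⊔ (P : Subgroup G) = ⊤ := by
        refine hM.2 _ (lt_of_le_of_ne le_sup_left fun h => hPM (le_sup_right.trans h.ge))
      have hinf : (P : Subgroup G) ⊓ M = ⊥ := by
        have hd := Subgroup.card_dvd_of_le
          (inf_le_left : (P : Subgroup G) ⊓ M ≤ (P : Subgroup G))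
        rw [hcardP] at hd
        rcases (Nat.Prime.eq_one_or_self_of_dvd pp _ hd) with h | h
        · exact Subgroup.eq_bot_of_card_eq _ h
        · exfalso
          apply hPM
          have : (P : Subgroup G) ⊓ M = (P : Subgroup G) :=
            Subgroup.eq_of_le_of_card_ge inf_le_left (by rw [hcardP, h])
          rw [← this]
          exact inf_le_right
      have hcardM : Nat.card ↥M = 16 := by
        have h1 : (P : Subgroup G).relIndex M = (P : Subgroup G).index := by
          rw [← Subgroup.relIndex_sup_left (K := (P : Subgroup G)) (H := M)]
          rw [sup_comm] at hsupM
          rw [hsupM, Subgroup.relIndex_top_right]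
        have h2 : (P : Subgroup G).subgroupOf M = ⊥ :=
          Subgroup.subgroupOf_eq_bot.mpr (disjoint_iff.mpr hinf)
        have h3 : (P : Subgroup G).relIndex M = Nat.card ↥M := by
          rw [Subgroup.relIndex, h2, Subgroup.index_bot]
        rw [← h3, h1, hPindex]
      -- M is a Sylow 2-subgroup, and K normal 2-subgroup lies in all of them
      have hcardM' : Nat.card ↥M = 2 ^ (Nat.card G).factorization 2 := by
        rw [hcardM, hcardG, hfac2, h16]
      obtain ⟨g, hg⟩ := MulAction.exists_smul_eq G (Sylow.ofCard M hcardM') Q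
      intro k hk
      have h1 : g * k * g⁻¹ ∈ K := hnorm.conj_mem k hk g
      have h2 : g * k * g⁻¹ ∈ (Q : Subgroup G) := hKQ h1
      rw [← hg] at h2
      have h3 : g * k * g⁻¹ ∈ MulAut.conj g • (Sylow.ofCard M hcardM' : Subgroup G) := h2
      rw [Subgroup.mem_pointwise_smul_iff_inv_smul_mem] at h3
      have h4 : (MulAut.conj g)⁻¹ • (g * k * g⁻¹) = k := by
        simp only [MulAut.smul_def, MulAut.conj_inv_apply]
        group
      rw [h4, Sylow.coe_ofCard] at h3
      exact h3
  intro k hk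
  rw [frattini, Order.radical, Subgroup.mem_iInf]
  intro M
  rw [Subgroup.mem_iInf]
  intro hM
  exact hKle M hM hk
end

section
/- Let G be a finite group, S a generating set, X ⊆ S such that ⟨X⟩ is abelian and nontrivial, and every g ∈ G either centralizes or inverts every element of ⟨X⟩. If Cay(⟨X⟩; X) has a hamiltonian cycle and Cay(G/⟨X⟩; S) has a hamiltonian path, then the map f(i,j) = x_i g_j (where x_0,...,x_{m-1} traverses the hamiltonian cycle and g_0,...,g_n lifts the hamiltonian path) embeds the Cartesian product of a cycle C_m and a path P_{n+1} as a spanning subgraph of Cay(G; S); consequently Cay(G; S) has a hamiltonian cycle. -/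
open SimpleGraph

/-- The Cayley graph `Cay(G; S)`: vertex set `G`, with `g` adjacent to `h` when
`g⁻¹h ∈ S ∪ S⁻¹`. -/
def cayleyGraph (G : Type) [Group G] (S : Set G) : SimpleGraph G where
  Adj g h := g ≠ h ∧ (g⁻¹ * h ∈ S ∨ (g⁻¹ * h)⁻¹ ∈ S)
  symm := by
    constructor
    rintro g h ⟨hne, hs⟩
    refine ⟨hne.symm, ?_⟩
    have : h⁻¹ * g = (g⁻¹ * h)⁻¹ := by group
    rw [this, inv_inv]
    tauto
  loopless := by constructor; rintro g ⟨hne, -⟩; exact hne rfl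

/-- A list `L = (s₁, …, sₘ)` of elements of `S ∪ S⁻¹` is a hamiltonian cycle in the Cayley
graph `Cay(G; S)` if the partial products `e, s₁, s₁s₂, …, s₁⋯sₘ₋₁` visit every element of
`G` exactly once, and the full product `s₁⋯sₘ` returns to the identity. -/
def IsHamCycle {G : Type} [Group G] (S : Set G) (L : List G) : Prop :=
  L ≠ [] ∧ (∀ s ∈ L, s ∈ S ∨ s⁻¹ ∈ S) ∧ L.length = Nat.card G ∧
    (((List.range L.length).map fun k => (L.take k).prod).Nodup) ∧ L.prod = 1

/-- A list `L = (s₁, …, sₘ)` of elements of `S ∪ S⁻¹` is a hamiltonian path in the Cayley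
graph `Cay(G; S)` if the partial products `e, s₁, s₁s₂, …, s₁⋯sₘ` visit every element of `G`
exactly once. -/
def IsHamPath {G : Type} [Group G] (S : Set G) (L : List G) : Prop :=
  (∀ s ∈ L, s ∈ S ∨ s⁻¹ ∈ S) ∧ L.length + 1 = Nat.card G ∧
    (((List.range (L.length + 1)).map fun k => (L.take k).prod).Nodup)



namespace Stmt19Aux

/-! ### Generic step-list machinery -/

variable {G : Type} [Group G]

/-- turn a vertex list (after the starting vertex `p`, with final return to `1`)
into the list of steps. -/
def mySteps : G → List G → List G
  | p, [] => [p⁻¹]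
  | p, a :: rest => (p⁻¹ * a) :: mySteps a rest

lemma mySteps_ne_nil (p : G) (l : List G) : mySteps p l ≠ [] := by
  cases l <;> simp [mySteps]

lemma mySteps_length (p : G) (l : List G) : (mySteps p l).length = l.length + 1 := by
  induction l generalizing p with
  | nil => simp [mySteps]
  | cons a rest ih => simp [mySteps, ih]

lemma mySteps_prod (p : G) (l : List G) : (mySteps p l).prod = p⁻¹ := by
  induction l generalizing p with
  | nil => simp [mySteps]
  | cons a rest ih => simp [mySteps, ih]

lemma mySteps_take (p : G) (l : List G) : ∀ k, k ≤ l.length →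
    ((mySteps p l).take k).prod = p⁻¹ * (p :: l).getD k 1 := by
  induction l generalizing p with
  | nil =>
    intro k hk
    match k, hk with
    | 0, _ => simp
    | 1, _ => simp [mySteps]
  | cons a rest ih =>
    intro k hk
    cases k with
    | zero => simp
    | succ k =>
      simp only [mySteps, List.take_succ_cons, List.prod_cons, List.getD_cons_succ]
      rw [ih a k (by simpa using hk)]
      simp [mul_assoc]

lemma mySteps_mem {S : Set G} : ∀ (l : List G) (p : G),
    List.IsChain (fun a b => a⁻¹ * b ∈ S ∨ (a⁻¹ * b)⁻¹ ∈ S) (p :: (l ++ [1])) →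
    ∀ s ∈ mySteps p l, s ∈ S ∨ s⁻¹ ∈ S := by
  intro l
  induction l with
  | nil =>
    intro p h s hs
    simp only [mySteps, List.mem_singleton] at hs
    subst hs
    have h1 := (List.isChain_cons_cons.mp h).1
    simpa using h1
  | cons a rest ih =>
    intro p h s hs
    simp only [List.cons_append] at h
    obtain ⟨h1, h2⟩ := List.isChain_cons_cons.mp h
    simp only [mySteps, List.mem_cons] at hs
    rcases hs with rfl | hs
    · simpa using h1
    · exact ih a h2 s hs

lemma map_range_getD {α : Type*} (l : List α) (d : α) :
    (List.range l.length).map (fun k => l.getD k d) = l := by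
  apply List.ext_getElem (by simp)
  intro i h1 h2
  simp only [List.getElem_map, List.getElem_range]
  exact List.getD_eq_getElem l d h2


lemma mySteps_partial (l : List G) :
    (List.range (l.length + 1)).map (fun k => ((mySteps 1 l).take k).prod) = 1 :: l := by
  have h1 : (1 :: l : List G).length = l.length + 1 := by simp
  conv_lhs => rw [← h1]
  conv_rhs => rw [← map_range_getD (1 :: l) 1]
  apply List.map_congr_left
  intro k hk
  rw [List.mem_range, h1] at hk
  rw [mySteps_take 1 l k (by omega)]
  simp

/-! ### The snake traversal coordinates -/

/-- adjacency (with bounds) in the cylinder grid `C_m × P_{n+1}` -/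
def Radj (m n : ℕ) (p q : ℕ × ℕ) : Prop :=
  p.1 < m ∧ q.1 < m ∧ p.2 ≤ n ∧ q.2 ≤ n ∧
    ((p.2 = q.2 ∧ ((p.1 + 1) % m = q.1 ∨ (q.1 + 1) % m = p.1)) ∨
      (p.1 = q.1 ∧ (p.2 + 1 = q.2 ∨ q.2 + 1 = p.2)))

lemma Radj_symm {m n : ℕ} {p q : ℕ × ℕ} (h : Radj m n p q) : Radj m n q p := by
  obtain ⟨h1, h2, h3, h4, h5⟩ := h
  exact ⟨h2, h1, h4, h3, by tauto⟩

def fwd (m j : ℕ) : List (ℕ × ℕ) := (List.range' 1 (m - 1)).map (fun i => (i, j))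

def lvl (m j : ℕ) : List (ℕ × ℕ) := if j % 2 = 1 then (fwd m j).reverse else fwd m j

def snakeB (m n : ℕ) : ℕ → List (ℕ × ℕ)
  | 0 => []
  | k + 1 => lvl m (n - k) ++ snakeB m n k ++ [(0, n - k)]

def coords (m n : ℕ) : List (ℕ × ℕ) :=
  (List.range m).map (fun i => (i, 0)) ++ snakeB m n n

lemma lvl_length (m j : ℕ) : (lvl m j).length = m - 1 := by
  unfold lvl fwd; split <;> simp

lemma mem_fwd {m j : ℕ} {p : ℕ × ℕ} (h : p ∈ fwd m j) :
    1 ≤ p.1 ∧ p.1 ≤ m - 1 ∧ p.2 = j := by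
  unfold fwd at h
  simp only [List.mem_map, List.mem_range'_1] at h
  obtain ⟨i, ⟨hi1, hi2⟩, rfl⟩ := h
  exact ⟨hi1, by omega, rfl⟩

lemma mem_lvl {m j : ℕ} {p : ℕ × ℕ} (h : p ∈ lvl m j) :
    1 ≤ p.1 ∧ p.1 ≤ m - 1 ∧ p.2 = j := by
  unfold lvl at h
  split at h
  · exact mem_fwd (List.mem_reverse.mp h)
  · exact mem_fwd h

lemma fwd_nodup (m j : ℕ) : (fwd m j).Nodup :=
  (List.nodup_range' (s := 1) (n := m-1)).map (fun a b h => by simpa using (Prod.mk.injEq _ _ _ _ ▸ h).1)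

lemma lvl_nodup (m j : ℕ) : (lvl m j).Nodup := by
  unfold lvl; split
  · exact List.nodup_reverse.mpr (fwd_nodup m j)
  · exact fwd_nodup m j

lemma snakeB_length (m n : ℕ) (hm : 1 ≤ m) : ∀ k, (snakeB m n k).length = k * m := by
  intro k
  induction k with
  | zero => simp [snakeB]
  | succ k ih =>
    simp only [snakeB, List.length_append, lvl_length, ih, List.length_singleton]
    cases m with
    | zero => omega
    | succ m => ring_nf; omega

lemma snakeB_mem (m n : ℕ) : ∀ k, k ≤ n → ∀ p ∈ snakeB m n k,
    p.1 ≤ m - 1 ∧ n + 1 - k ≤ p.2 ∧ p.2 ≤ n := by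
  intro k
  induction k with
  | zero => simp [snakeB]
  | succ k ih =>
    intro hk p hp
    simp only [snakeB, List.mem_append, List.mem_singleton] at hp
    rcases hp with (hp | hp) | rfl
    · obtain ⟨h1, h2, h3⟩ := mem_lvl hp
      omega
    · obtain ⟨h1, h2, h3⟩ := ih (by omega) p hp
      omega
    · simp only []
      omega

lemma snakeB_nodup (m n : ℕ) : ∀ k, k ≤ n → (snakeB m n k).Nodup := by
  intro k
  induction k with
  | zero => simp [snakeB]
  | succ k ih =>
    intro hk
    simp only [snakeB, List.nodup_append']
    refine ⟨⟨lvl_nodup m _, ih (by omega), ?_⟩, List.nodup_singleton _, ?_⟩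
    · intro p hp hp'
      have h1 := mem_lvl hp
      have h2 := snakeB_mem m n k (by omega) p hp'
      omega
    · intro p hp hp'
      simp only [List.mem_singleton] at hp'
      subst hp'
      simp only [List.mem_append] at hp
      rcases hp with hp | hp
      · have := mem_lvl hp; omega
      · have := snakeB_mem m n k (by omega) _ hp; omega


lemma chain'_range' {R : ℕ → ℕ → Prop} :
    ∀ (n s : ℕ), (∀ i, s ≤ i → i + 1 < s + n → R i (i + 1)) →
      List.IsChain R (List.range' s n) := by
  intro n
  induction n with
  | zero => intro s _; simp
  | succ n ih =>
    intro s h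
    rw [List.range'_succ]
    cases n with
    | zero => simp
    | succ n' =>
      rw [List.range'_succ]
      exact List.isChain_cons_cons.mpr ⟨h s le_rfl (by omega),
        by rw [← List.range'_succ]; exact ih (s+1) (fun i h1 h2 => h i (by omega) (by omega))⟩

lemma fwd_head? {m j : ℕ} (hm : 2 ≤ m) : (fwd m j).head? = some (1, j) := by
  obtain ⟨s, hs⟩ : ∃ s, m - 1 = s + 1 := ⟨m - 2, by omega⟩
  unfold fwd
  rw [hs, List.range'_succ, List.head?_map]
  rfl

lemma fwd_getLast? {m j : ℕ} (hm : 2 ≤ m) : (fwd m j).getLast? = some (m - 1, j) := by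
  obtain ⟨s, hs⟩ : ∃ s, m - 1 = s + 1 := ⟨m - 2, by omega⟩
  unfold fwd
  rw [hs, List.range'_1_concat, List.map_append, List.map_singleton, List.getLast?_concat]
  congr 2
  omega

lemma lvl_head? {m j : ℕ} (hm : 2 ≤ m) :
    (lvl m j).head? = some ((if j % 2 = 1 then m - 1 else 1), j) := by
  unfold lvl
  split
  · rw [List.head?_reverse, fwd_getLast? hm]
  · rw [fwd_head? hm]

lemma lvl_getLast? {m j : ℕ} (hm : 2 ≤ m) :
    (lvl m j).getLast? = some ((if j % 2 = 1 then 1 else m - 1), j) := by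
  unfold lvl
  split
  · rw [List.getLast?_reverse, fwd_head? hm]
  · rw [fwd_getLast? hm]

lemma chain'_fwd {m n j : ℕ} (hm : 2 ≤ m) (hj : j ≤ n) :
    List.IsChain (Radj m n) (fwd m j) := by
  unfold fwd
  rw [List.isChain_map]
  apply chain'_range'
  intro i h1 h2
  refine ⟨by omega, by omega, hj, hj, Or.inl ⟨rfl, Or.inl ?_⟩⟩
  exact Nat.mod_eq_of_lt (by omega)

lemma chain'_lvl {m n j : ℕ} (hm : 2 ≤ m) (hj : j ≤ n) :
    List.IsChain (Radj m n) (lvl m j) := by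
  unfold lvl
  split
  · exact List.isChain_reverse.mpr ((chain'_fwd hm hj).imp (fun a b h => Radj_symm h))
  · exact chain'_fwd hm hj

lemma lvl_ne_nil {m j : ℕ} (hm : 2 ≤ m) : lvl m j ≠ [] := by
  have := lvl_length m j
  intro h
  rw [h] at this
  simp at this
  omega

lemma snakeB_ne_nil {m n k : ℕ} (hk : 1 ≤ k) : snakeB m n k ≠ [] := by
  cases k with
  | zero => omega
  | succ k => simp [snakeB]

lemma snake_chain (m n : ℕ) (hm : 2 ≤ m) : ∀ k, 1 ≤ k → k ≤ n →
    List.IsChain (Radj m n) (snakeB m n k) ∧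
    (snakeB m n k).head? = some ((if (n + 1 - k) % 2 = 1 then m - 1 else 1), n + 1 - k) ∧
    (snakeB m n k).getLast? = some (0, n + 1 - k) := by
  intro k
  induction k with
  | zero => omega
  | succ k ih =>
    intro _ hk
    rcases Nat.eq_zero_or_pos k with rfl | hk1
    · -- base case : snakeB m n 1 = lvl m n ++ [(0, n)]
      have hb : snakeB m n 1 = lvl m n ++ [(0, n)] := by simp [snakeB]
      have hn1 : n + 1 - 1 = n := by omega
      rw [hb, hn1]
      refine ⟨?_, ?_, ?_⟩
      · rw [List.isChain_append]
        refine ⟨chain'_lvl hm le_rfl, by simp, ?_⟩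
        intro x hx y hy
        rw [lvl_getLast? hm] at hx
        simp only [Option.mem_def, Option.some.injEq] at hx hy
        simp only [List.head?_cons, Option.some.injEq] at hy
        subst hx; subst hy
        rcases Nat.mod_two_eq_zero_or_one n with hpar | hpar
        · rw [if_neg (by omega)]
          refine ⟨by omega, by omega, le_rfl, le_rfl, Or.inl ⟨rfl, Or.inl ?_⟩⟩
          rw [show m - 1 + 1 = m by omega, Nat.mod_self]
        · rw [if_pos hpar]
          refine ⟨by omega, by omega, le_rfl, le_rfl, Or.inl ⟨rfl, Or.inr ?_⟩⟩
          exact Nat.mod_eq_of_lt (by omega)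
      · rw [List.head?_append_of_ne_nil _ (lvl_ne_nil hm), lvl_head? hm]
      · rw [List.getLast?_concat]
    · -- inductive step
      obtain ⟨ihc, ihh, ihl⟩ := ih hk1 (by omega)
      have hj1 : n + 1 - k = (n - k) + 1 := by omega
      have hj2 : n + 1 - (k + 1) = n - k := by omega
      have hb : snakeB m n (k + 1) = (lvl m (n - k) ++ snakeB m n k) ++ [(0, n - k)] := by
        simp [snakeB]
      rw [hb, hj2]
      refine ⟨?_, ?_, ?_⟩
      · rw [List.isChain_append]
        refine ⟨?_, by simp, ?_⟩
        · rw [List.isChain_append]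
          refine ⟨chain'_lvl hm (by omega), ihc, ?_⟩
          intro x hx y hy
          rw [lvl_getLast? hm] at hx
          rw [ihh, hj1] at hy
          simp only [Option.mem_def, Option.some.injEq] at hx hy
          subst hx; subst hy
          have hcc : (if (n - k + 1) % 2 = 1 then m - 1 else 1)
              = (if (n - k) % 2 = 1 then 1 else m - 1) := by
            rcases Nat.mod_two_eq_zero_or_one (n - k) with hpar | hpar <;> simp [hpar] <;> omega
          rw [hcc]
          refine ⟨by split <;> omega, by split <;> omega, by omega, by omega,
            Or.inr ⟨rfl, Or.inl rfl⟩⟩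
        · intro x hx y hy
          rw [List.getLast?_append_of_ne_nil _ (snakeB_ne_nil hk1), ihl, hj1] at hx
          simp only [Option.mem_def, Option.some.injEq] at hx hy
          simp only [List.head?_cons, Option.some.injEq] at hy
          subst hx; subst hy
          exact ⟨by omega, by omega, by omega, by omega, Or.inr ⟨rfl, Or.inr rfl⟩⟩
      · rw [List.head?_append_of_ne_nil _
          (List.append_ne_nil_of_left_ne_nil (lvl_ne_nil hm) _),
          List.head?_append_of_ne_nil _ (lvl_ne_nil hm), lvl_head? hm]
      · rw [List.getLast?_concat]

lemma c0_chain {m n : ℕ} (hm : 2 ≤ m) :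
    List.IsChain (Radj m n) ((List.range m).map (fun i => (i, (0:ℕ)))) := by
  rw [List.isChain_map, List.range_eq_range']
  apply chain'_range'
  intro i h1 h2
  refine ⟨by omega, by omega, by omega, by omega, Or.inl ⟨rfl, Or.inl ?_⟩⟩
  exact Nat.mod_eq_of_lt (by omega)

lemma c0_ne_nil {m : ℕ} (hm : 2 ≤ m) : (List.range m).map (fun i => (i, (0:ℕ))) ≠ [] := by
  simp
  omega

lemma c0_getLast? {m : ℕ} (hm : 2 ≤ m) :
    ((List.range m).map (fun i => (i, (0:ℕ)))).getLast? = some (m - 1, 0) := by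
  rw [List.range_eq_range', show m = (m - 1) + 1 by omega, List.range'_1_concat,
    List.map_append, List.map_singleton, List.getLast?_concat]
  congr 2
  omega

lemma c0_head? {m : ℕ} (hm : 2 ≤ m) :
    ((List.range m).map (fun i => (i, (0:ℕ)))).head? = some (0, 0) := by
  rw [List.range_eq_range', show m = (m - 1) + 1 by omega, List.range'_succ, List.head?_map]
  rfl

lemma coords_chain (m n : ℕ) (hm : 2 ≤ m) :
    List.IsChain (Radj m n) (coords m n ++ [((0:ℕ), (0:ℕ))]) := by
  unfold coords
  rw [List.append_assoc, List.isChain_append]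
  refine ⟨c0_chain hm, ?_, ?_⟩
  · -- chain of snake ++ [(0,0)]
    rcases Nat.eq_zero_or_pos n with rfl | hn
    · simp [snakeB]
    · obtain ⟨hc, hh, hl⟩ := snake_chain m n hm n hn le_rfl
      rw [List.isChain_append]
      refine ⟨hc, by simp, ?_⟩
      intro x hx y hy
      rw [hl] at hx
      simp only [Option.mem_def, Option.some.injEq] at hx hy
      simp only [List.head?_cons, Option.some.injEq] at hy
      subst hx; subst hy
      have : n + 1 - n = 1 := by omega
      rw [this]
      exact ⟨by omega, by omega, by omega, by omega, Or.inr ⟨rfl, Or.inr rfl⟩⟩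
  · intro x hx y hy
    rw [c0_getLast? hm] at hx
    simp only [Option.mem_def, Option.some.injEq] at hx
    subst hx
    rcases Nat.eq_zero_or_pos n with rfl | hn
    · simp only [snakeB, List.nil_append, List.head?_cons, Option.mem_def,
        Option.some.injEq] at hy
      subst hy
      refine ⟨by omega, by omega, by omega, by omega, Or.inl ⟨rfl, Or.inl ?_⟩⟩
      rw [show m - 1 + 1 = m by omega, Nat.mod_self]
    · obtain ⟨hc, hh, hl⟩ := snake_chain m n hm n hn le_rfl
      rw [List.head?_append_of_ne_nil _ (snakeB_ne_nil hn), hh] at hy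
      have : n + 1 - n = 1 := by omega
      rw [this, if_pos (by norm_num)] at hy
      simp only [Option.mem_def, Option.some.injEq] at hy
      subst hy
      refine ⟨by omega, by omega, by omega, by omega, Or.inr ⟨rfl, Or.inl rfl⟩⟩

lemma coords_length (m n : ℕ) (hm : 2 ≤ m) : (coords m n).length = m * (n + 1) := by
  simp only [coords, List.length_append, List.length_map, List.length_range,
    snakeB_length m n (by omega) n]
  ring

lemma coords_nodup (m n : ℕ) (hm : 2 ≤ m) : (coords m n).Nodup := by
  unfold coords
  rw [List.nodup_append']
  refine ⟨List.Nodup.map_on ?_ (List.nodup_range (n := m)), snakeB_nodup m n n le_rfl, ?_⟩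
  · intro a _ b _ h
    simpa using (Prod.mk.injEq _ _ _ _ ▸ h).1
  · intro p hp hp'
    simp only [List.mem_map, List.mem_range] at hp
    obtain ⟨i, _, rfl⟩ := hp
    have := snakeB_mem m n n le_rfl _ hp'
    omega

lemma coords_mem (m n : ℕ) (hm : 2 ≤ m) : ∀ p ∈ coords m n, p.1 < m ∧ p.2 ≤ n := by
  intro p hp
  unfold coords at hp
  rw [List.mem_append] at hp
  rcases hp with hp | hp
  · simp only [List.mem_map, List.mem_range] at hp
    obtain ⟨i, hi, rfl⟩ := hp
    exact ⟨hi, by omega⟩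
  · have := snakeB_mem m n n le_rfl _ hp
    omega

lemma coords_cons (m n : ℕ) (hm : 2 ≤ m) : ∃ t, coords m n = ((0:ℕ), (0:ℕ)) :: t := by
  unfold coords
  rw [List.range_eq_range', show m = (m - 1) + 1 by omega, List.range'_succ]
  simp only [List.map_cons, List.cons_append]
  exact ⟨_, rfl⟩

end Stmt19Aux

open Stmt19Aux in
/-- Let `G` be a finite group, `S` a generating set, `X ⊆ S` with `⟨X⟩` abelian and
nontrivial, and suppose every `g ∈ G` either centralizes or inverts every element of `⟨X⟩`
(so `⟨X⟩ ⊴ G`). If `Cay(⟨X⟩; X)` has a hamiltonian cycle (of length `m`) and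
`Cay(G/⟨X⟩; S)` has a hamiltonian path (with `n + 1` vertices), then the Cartesian product
of the cycle `Cₘ` and the path `Pₙ₊₁` embeds as a spanning subgraph of `Cay(G; S)`;
consequently `Cay(G; S)` has a hamiltonian cycle. -/
theorem stmt19 (G : Type) [Group G] [Fintype G] (S X : Set G) (hXS : X ⊆ S)
    (hSgen : Subgroup.closure S = ⊤)
    (habel : ∀ x ∈ Subgroup.closure X, ∀ y ∈ Subgroup.closure X, x * y = y * x)
    (hnt : Subgroup.closure X ≠ ⊥)
    (hci : ∀ g : G, (∀ x ∈ Subgroup.closure X, g⁻¹ * x * g = x) ∨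
      (∀ x ∈ Subgroup.closure X, g⁻¹ * x * g = x⁻¹))
    [hn : (Subgroup.closure X).Normal]
    (LC : List ↥(Subgroup.closure X))
    (hC : IsHamCycle {x : ↥(Subgroup.closure X) | (x : G) ∈ X} LC)
    (LP : List (G ⧸ Subgroup.closure X))
    (hP : IsHamPath ((QuotientGroup.mk' (Subgroup.closure X)) '' S) LP) :
    (∃ φ : (cycleGraph LC.length □ pathGraph (LP.length + 1)) →g cayleyGraph G S,
      Function.Bijective φ) ∧
    ∃ L : List G, IsHamCycle S L := by
  classical
  obtain ⟨hCne, hCmem, hClen, hCnodup, hCprod⟩ := hC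
  obtain ⟨hPmem, hPlen, hPnodup⟩ := hP
  set m := LC.length with hm
  set n := LP.length with hn'
  have hm2 : 2 ≤ m := by
    rw [hClen]
    exact (Subgroup.one_lt_card_iff_ne_bot (Subgroup.closure X)).mpr hnt
  set π := QuotientGroup.mk' (Subgroup.closure X) with hπdef
  -- lift the quotient hamiltonian path steps to elements of S ∪ S⁻¹
  have hlift : ∀ q ∈ LP, ∃ s : G, (s ∈ S ∨ s⁻¹ ∈ S) ∧ π s = q := by
    intro q hq
    rcases hPmem q hq with h | h
    · obtain ⟨s, hs, hsq⟩ := h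
      exact ⟨s, Or.inl hs, hsq⟩
    · obtain ⟨s, hs, hsq⟩ := h
      exact ⟨s⁻¹, Or.inr (by simpa using hs), by rw [map_inv, hsq, inv_inv]⟩
  let lift : G ⧸ Subgroup.closure X → G := fun q =>
    if h : ∃ s : G, (s ∈ S ∨ s⁻¹ ∈ S) ∧ π s = q then h.choose else 1
  have hlift1 : ∀ q ∈ LP, (lift q ∈ S ∨ (lift q)⁻¹ ∈ S) ∧ π (lift q) = q := by
    intro q hq
    have h := hlift q hq
    simp only [lift, dif_pos h]
    exact h.choose_spec
  set LG := LP.map lift with hLGdef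
  have hLGlen : LG.length = n := by simp [hLGdef, hn']
  have hLGmap : LG.map π = LP := by
    rw [hLGdef, List.map_map]
    conv_rhs => rw [← List.map_id LP]
    exact List.map_congr_left fun q hq => (hlift1 q hq).2
  have hLGmem : ∀ t ∈ LG, t ∈ S ∨ t⁻¹ ∈ S := by
    intro t ht
    rw [hLGdef, List.mem_map] at ht
    obtain ⟨q, hq, rfl⟩ := ht
    exact (hlift1 q hq).1
  -- the two coordinate functions
  set xg : ℕ → G := fun i => ((LC.take i).prod : G) with hxgdef
  set gg : ℕ → G := fun j => (LG.take j).prod with hggdef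
  set F : ℕ × ℕ → G := fun p => xg p.1 * gg p.2 with hFdef
  have hx0 : xg 0 = 1 := by simp [hxgdef]
  have hg0 : gg 0 = 1 := by simp [hggdef]
  have hF00 : F (0, 0) = 1 := by simp [hFdef, hx0, hg0]
  have hπx : ∀ i, π (xg i) = 1 := by
    intro i
    rw [hxgdef]
    simp only [hπdef, QuotientGroup.mk'_apply]
    rw [QuotientGroup.eq_one_iff]
    exact SetLike.coe_mem _
  have hπg : ∀ j, π (gg j) = (LP.take j).prod := by
    intro j
    rw [hggdef]
    simp only []
    rw [map_list_prod, List.map_take, hLGmap]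
  have hxsucc : ∀ i (h : i < m), xg (i + 1) = xg i * ((LC[i]'h : ↥(Subgroup.closure X)) : G) := by
    intro i h
    rw [hxgdef]
    simp only []
    rw [List.prod_take_succ LC i h]
    push_cast
    rfl
  have hxm : xg m = 1 := by
    rw [hxgdef]
    simp only [hm, List.take_length, hCprod]
    rfl
  have hstepX : ∀ i (h : i < m),
      ((LC[i]'h : ↥(Subgroup.closure X)) : G) ∈ X ∨ (((LC[i]'h : ↥(Subgroup.closure X)) : G))⁻¹ ∈ X := by
    intro i h
    have := hCmem (LC[i]'h) (LC.getElem_mem h)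
    simpa using this
  -- injectivity
  have hquotInj : ∀ j j', j < n + 1 → j' < n + 1 →
      (LP.take j).prod = (LP.take j').prod → j = j' := by
    intro j j' hj hj' h
    exact List.inj_on_of_nodup_map hPnodup (List.mem_range.mpr hj) (List.mem_range.mpr hj') h
  have hsubInj : ∀ i i', i < m → i' < m → xg i = xg i' → i = i' := by
    intro i i' hi hi' h
    have h' : (LC.take i).prod = (LC.take i').prod := by
      apply Subtype.coe_injective
      exact h
    exact List.inj_on_of_nodup_map hCnodup (List.mem_range.mpr hi) (List.mem_range.mpr hi') h'
  have hINJ : ∀ a j b j', a < m → j < n + 1 → b < m → j' < n + 1 →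
      F (a, j) = F (b, j') → a = b ∧ j = j' := by
    intro a j b j' ha hj hb hj' h
    have hq : (LP.take j).prod = (LP.take j').prod := by
      have h2 := congrArg π h
      simp only [hFdef, map_mul, hπx, hπg, one_mul] at h2
      exact h2
    have hjj : j = j' := hquotInj j j' hj hj' hq
    subst hjj
    have hxx : xg a = xg b := by
      have : xg a * gg j = xg b * gg j := h
      exact mul_right_cancel this
    exact ⟨hsubInj a b ha hb hxx, rfl⟩
  -- conjugation
  have hCONJ : ∀ (h s : G), (s ∈ X ∨ s⁻¹ ∈ X) →
      (h⁻¹ * s * h ∈ S ∨ (h⁻¹ * s * h)⁻¹ ∈ S) := by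
    intro h s hs
    have hsN : s ∈ Subgroup.closure X := by
      rcases hs with hs | hs
      · exact Subgroup.subset_closure hs
      · have h1 : s⁻¹ ∈ Subgroup.closure X := Subgroup.subset_closure hs
        simpa using (Subgroup.closure X).inv_mem h1
    rcases hci h with hc | hc
    · rw [hc s hsN]
      rcases hs with hs | hs
      · exact Or.inl (hXS hs)
      · exact Or.inr (hXS hs)
    · rw [hc s hsN]
      rcases hs with hs | hs
      · exact Or.inr (by simpa using hXS hs)
      · exact Or.inl (hXS hs)
  set Rstep : G → G → Prop := fun u v => u⁻¹ * v ∈ S ∨ (u⁻¹ * v)⁻¹ ∈ S with hRstepdef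
  have hsym : ∀ u v : G, Rstep u v → Rstep v u := by
    intro u v h
    rcases h with h | h
    · exact Or.inr (by rw [show (v⁻¹ * u)⁻¹ = u⁻¹ * v by group]; exact h)
    · exact Or.inl (by rw [show v⁻¹ * u = (u⁻¹ * v)⁻¹ by group]; exact h)
  have hstepH : ∀ a j, a < m → Rstep (F (a, j)) (F ((a + 1) % m, j)) := by
    intro a j ha
    have hxa1 : xg ((a + 1) % m) = xg a * ((LC[a]'ha : ↥(Subgroup.closure X)) : G) := by
      rcases Nat.lt_or_ge (a + 1) m with h | h
      · rw [Nat.mod_eq_of_lt h]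
        exact hxsucc a ha
      · have hme : a + 1 = m := by omega
        rw [hme, Nat.mod_self, hx0, ← hxm, ← hme]
        exact hxsucc a ha
    have key : (F (a, j))⁻¹ * F ((a + 1) % m, j)
        = (gg j)⁻¹ * ((LC[a]'ha : ↥(Subgroup.closure X)) : G) * gg j := by
      simp only [hFdef, hxa1]
      group
    rw [hRstepdef]
    simp only []
    rw [key]
    exact hCONJ (gg j) _ (hstepX a ha)
  have hstepV : ∀ a j, j < n → Rstep (F (a, j)) (F (a, j + 1)) := by
    intro a j hj
    have hj' : j < LG.length := by omega
    have hgsucc : gg (j + 1) = gg j * LG[j]'hj' := by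
      rw [hggdef]
      simp only []
      rw [List.prod_take_succ LG j hj']
    have key : (F (a, j))⁻¹ * F (a, j + 1) = LG[j]'hj' := by
      simp only [hFdef, hgsucc]
      group
    rw [hRstepdef]
    simp only []
    rw [key]
    exact hLGmem _ (LG.getElem_mem hj')
  have hSTEP : ∀ p q, Radj m n p q → Rstep (F p) (F q) := by
    rintro ⟨a, j⟩ ⟨b, j'⟩ ⟨ha, hb, hj, hj', hadj⟩
    rcases hadj with ⟨hjj, hH | hH⟩ | ⟨haa, hV | hV⟩
    · simp only [] at hjj hH ⊢
      rw [← hjj, ← hH]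
      exact hstepH a j ha
    · simp only [] at hjj hH ⊢
      rw [← hjj, ← hH]
      exact hsym _ _ (hstepH b j hb)
    · simp only [] at haa hV ⊢
      have hjn : j < n := by omega
      rw [← haa, ← hV]
      exact hstepV a j hjn
    · simp only [] at haa hV ⊢
      have hjn : j' < n := by omega
      rw [← haa, ← hV]
      exact hsym _ _ (hstepV a j' hjn)
  -- cardinality
  have hcard : Fintype.card G = m * (n + 1) := by
    have h1 := Subgroup.card_eq_card_quotient_mul_card_subgroup (Subgroup.closure X)
    rw [← hPlen, ← hClen] at h1
    rw [← Nat.card_eq_fintype_card, h1]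
    ring
  haveI : NeZero m := ⟨by omega⟩
  constructor
  · -- the graph embedding
    refine ⟨⟨fun p => F (p.1.val, p.2.val), ?_⟩, ?_⟩
    · intro a b hab
      rw [SimpleGraph.boxProd_adj] at hab
      have hne : F (a.1.val, a.2.val) ≠ F (b.1.val, b.2.val) := by
        intro heq
        obtain ⟨h1, h2⟩ := hINJ _ _ _ _ a.1.isLt a.2.isLt b.1.isLt b.2.isLt heq
        rcases hab with ⟨hc, -⟩ | ⟨hc, -⟩
        · exact hc.ne (Fin.ext h1)
        · exact hc.ne (Fin.ext h2)
      refine ⟨hne, ?_⟩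
      show Rstep (F (a.1.val, a.2.val)) (F (b.1.val, b.2.val))
      rcases hab with ⟨hc, he⟩ | ⟨hc, he⟩
      · rw [SimpleGraph.cycleGraph_adj'] at hc
        have he' : a.2.val = b.2.val := by rw [he]
        rcases hc with hc | hc
        · have hv : a.1.val = (b.1.val + 1) % m := by
            have h3 : (a.1 - b.1) + b.1 = a.1 := sub_add_cancel _ _
            have h4 := congrArg Fin.val h3
            rw [Fin.val_add, hc] at h4
            rw [← h4, Nat.add_comm]
          rw [hv, he']
          exact hsym _ _ (hstepH b.1.val b.2.val b.1.isLt)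
        · have hv : b.1.val = (a.1.val + 1) % m := by
            have h3 : (b.1 - a.1) + a.1 = b.1 := sub_add_cancel _ _
            have h4 := congrArg Fin.val h3
            rw [Fin.val_add, hc] at h4
            rw [← h4, Nat.add_comm]
          rw [hv, he']
          exact hstepH a.1.val b.2.val a.1.isLt
      · rw [SimpleGraph.pathGraph_adj] at hc
        have he' : a.1.val = b.1.val := by rw [he]
        rcases hc with hc | hc
        · have hjn : a.2.val < n := by have := b.2.isLt; omega
          rw [he', ← hc]
          exact hstepV b.1.val a.2.val hjn
        · have hjn : b.2.val < n := by have := a.2.isLt; omega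
          rw [he', ← hc]
          exact hsym _ _ (hstepV b.1.val b.2.val hjn)
    · rw [Fintype.bijective_iff_injective_and_card]
      constructor
      · intro a b heq
        obtain ⟨h1, h2⟩ := hINJ _ _ _ _ a.1.isLt a.2.isLt b.1.isLt b.2.isLt heq
        exact Prod.ext (Fin.ext h1) (Fin.ext h2)
      · simp [hcard]
  · -- the hamiltonian cycle
    obtain ⟨ct, hct⟩ := coords_cons m n hm2
    have e1 : List.map F (coords m n) = 1 :: List.map F ct := by
      rw [hct, List.map_cons, hF00]
    have hVnodup : (List.map F (coords m n)).Nodup := by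
      apply List.Nodup.map_on ?_ (coords_nodup m n hm2)
      intro p hp q hq hpq
      obtain ⟨hp1, hp2⟩ := coords_mem m n hm2 p hp
      obtain ⟨hq1, hq2⟩ := coords_mem m n hm2 q hq
      obtain ⟨h1, h2⟩ := hINJ p.1 p.2 q.1 q.2 hp1 (by omega) hq1 (by omega) hpq
      exact Prod.ext h1 h2
    refine ⟨mySteps 1 (ct.map F), mySteps_ne_nil _ _, ?_, ?_, ?_, ?_⟩
    · -- every step lies in S ∪ S⁻¹
      have hch := coords_chain m n hm2
      have hch2 : List.IsChain (fun p q => (F p)⁻¹ * (F q) ∈ S ∨ ((F p)⁻¹ * (F q))⁻¹ ∈ S)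
          (coords m n ++ [(0, 0)]) := hch.imp (fun p q h => hSTEP p q h)
      have hch3 := (List.isChain_map (R := fun u v : G => u⁻¹ * v ∈ S ∨ (u⁻¹ * v)⁻¹ ∈ S) F).mpr hch2
      rw [hct] at hch3
      simp only [List.cons_append, List.map_cons, List.map_append, List.map_singleton,
        hF00] at hch3
      exact mySteps_mem _ _ hch3
    · -- length
      rw [mySteps_length, List.length_map, Nat.card_eq_fintype_card, hcard]
      have hlen := coords_length m n hm2
      rw [hct] at hlen
      simpa using hlen
    · -- partial products are distinct
      rw [mySteps_length, mySteps_partial, ← e1]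
      exact hVnodup
    · -- total product is 1
      rw [mySteps_prod]
      simp
end
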